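/- arXiv:0803.2122 — 2 statements merged into one kernel-verified Lean document; each statement's English description precedes it below -/
import Mathlib

section
/- Let ε = ε(k) be the unique solution in (0,1) of ε(2−ε)^{k−1} = 1. Then for all sufficiently large k, 2^{1−k} + k·4^{−k} < ε < 2^{1−k} + 3k·4^{−k}. -/
lemma aux50 : ∀ n : ℕ, 29 ≤ n → 50 * (n * (n+1)) ≤ 2^n := by
  intro n hn
  induction n with
  | zero => omega
  | succ m ih =>
    rcases Nat.lt_or_ge m 29 with h | h
    · have hm : m = 28 := by omega
      subst hm; norm_num
    · have h1 := ih h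
      have h2 : 2^(m+1) = 2 * 2^m := by ring
      nlinarith [h1, h2]

set_option maxHeartbeats 1000000 in
/-- For all sufficiently large k, the solution ε ∈ (0,1) of
ε(2−ε)^{k−1} = 1 satisfies 2^{1−k} + k·4^{−k} < ε < 2^{1−k} + 3k·4^{−k}. -/
theorem stmt7 : ∃ K : ℕ, ∀ k : ℕ, K ≤ k → ∀ ε : ℝ, ε ∈ Set.Ioo (0 : ℝ) 1 →
    ε * (2 - ε) ^ (k - 1) = 1 →
    (2 : ℝ) ^ ((1 : ℤ) - k) + k * (4 : ℝ) ^ (-(k : ℤ)) < ε ∧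
      ε < (2 : ℝ) ^ ((1 : ℤ) - k) + 3 * k * (4 : ℝ) ^ (-(k : ℤ)) := by
  use 30
  intro k hk ε hmem heq
  obtain ⟨hε0, hε1⟩ := hmem
  obtain ⟨n, rfl⟩ : ∃ n, k = n + 1 := ⟨k - 1, by omega⟩
  have hn : 29 ≤ n := by omega
  simp only [Nat.add_sub_cancel] at heq
  set N : ℝ := (n : ℝ) with hNdef
  have hN29 : (29 : ℝ) ≤ N := by rw [hNdef]; exact_mod_cast hn
  set P : ℝ := (2:ℝ)^n with hPdef
  have hP : 0 < P := by positivity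
  set q : ℝ := P⁻¹ with hqdef
  have hq : 0 < q := by positivity
  have hqP : q * P = 1 := inv_mul_cancel₀ hP.ne'
  have hPq : P * q = 1 := mul_inv_cancel₀ hP.ne'
  have hP1 : (1:ℝ) ≤ P := one_le_pow₀ (by norm_num)
  have hq1 : q ≤ 1 := by
    have h := mul_le_mul_of_nonneg_left hP1 hq.le
    rw [mul_one, hqP] at h; exact h
  -- smallness facts
  have hsmall : 50 * (N * (N+1)) * q ≤ 1 := by
    have h := aux50 n hn
    have h' : 50 * (N * (N+1)) ≤ P := by
      rw [hNdef, hPdef]; exact_mod_cast h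
    calc 50 * (N * (N+1)) * q ≤ P * q := mul_le_mul_of_nonneg_right h' hq.le
      _ = 1 := hPq
  have hN1 : (0:ℝ) < N + 1 := by linarith
  have hNq : (N+1)*q ≤ 1/100 := by
    have hx : 0 ≤ (N - 29)*((N+1)*q) := mul_nonneg (by linarith) (by positivity)
    nlinarith [hx, hsmall]
  have hNNq : N*(N+1)*q ≤ 1/50 := by nlinarith [hsmall]
  have h2ε : ε < 2 := by linarith
  have hpowpos : (0:ℝ) < (2-ε)^n := pow_pos (by linarith) n
  -- Step 0 : q ≤ ε
  have hεq : q ≤ ε := by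
    have h1 : (2-ε)^n ≤ P := pow_le_pow_left₀ (by linarith) (by linarith) n
    have h2 : 1 ≤ ε * P := by
      have h3 := mul_le_mul_of_nonneg_left h1 hε0.le
      linarith [heq, h3]
    have h3 := mul_le_mul_of_nonneg_right h2 hq.le
    rw [one_mul, mul_assoc, hPq, mul_one] at h3
    exact h3
  -- Step 1 : ε (N+1) < 2
  have hstep1 : ε * (N+1) < 2 := by
    by_contra hcon
    push_neg at hcon
    have ht : 0 < 1 - ε := by linarith
    have hber : 1 + (n:ℝ) * (1-ε) ≤ (1 + (1-ε))^n := one_add_mul_le_pow (by linarith) n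
    have h1 : ε * (1 + N*(1-ε)) ≤ 1 := by
      calc ε * (1 + N*(1-ε)) ≤ ε * (1+(1-ε))^n := mul_le_mul_of_nonneg_left hber hε0.le
        _ = ε * (2-ε)^n := by ring_nf
        _ = 1 := heq
    have hprod : 0 ≤ (ε*(N+1) - 2) * (1-ε) := mul_nonneg (by linarith) ht.le
    nlinarith [h1, hprod, mul_pos ht ht]
  -- Step 2a : ε P ≤ N+1
  have h2a : ε * P ≤ N + 1 := by
    have hbase : 2*N/(N+1) ≤ 2 - ε := by
      rw [div_le_iff₀ hN1]; nlinarith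
    have hb0 : (0:ℝ) ≤ 2*N/(N+1) := by positivity
    have hpb : (2*N/(N+1))^n ≤ (2-ε)^n := pow_le_pow_left₀ hb0 hbase n
    have hsplit : (2*N/(N+1))^n = P * (1 - 1/(N+1))^n := by
      rw [hPdef, ← mul_pow]
      congr 1
      field_simp
      ring
    have hber2 : 1/(N+1) ≤ (1 - 1/(N+1))^n := by
      have hd1 : 1/(N+1) ≤ 1 := by rw [div_le_one hN1]; linarith
      have hd2 : 0 < 1/(N+1) := one_div_pos.mpr hN1
      have hb := one_add_mul_le_pow (a := -(1/(N+1))) (by linarith) n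
      calc 1/(N+1) = 1 + (n:ℝ) * (-(1/(N+1))) := by
            rw [← hNdef]; field_simp; ring
        _ ≤ (1 + -(1/(N+1)))^n := hb
        _ = (1 - 1/(N+1))^n := by ring_nf
    have hc : P * (1/(N+1)) ≤ (2-ε)^n := by
      calc P * (1/(N+1)) ≤ P * (1 - 1/(N+1))^n :=
            mul_le_mul_of_nonneg_left hber2 hP.le
        _ = (2*N/(N+1))^n := hsplit.symm
        _ ≤ (2-ε)^n := hpb
    have h3 := mul_le_mul_of_nonneg_left hc hε0.le
    rw [heq] at h3
    have h3' : ε * P / (N+1) ≤ 1 := by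
      rw [show ε*P/(N+1) = ε*(P*(1/(N+1))) by ring]; exact h3
    exact (div_le_one hN1).mp h3'
  -- Step 2b : ε P ≤ 100/99
  have hεup1 : ε ≤ (N+1) * q := by
    have h := mul_le_mul_of_nonneg_right h2a hq.le
    rw [mul_assoc, hPq, mul_one] at h
    exact h
  have h2b : ε * P ≤ 100/99 := by
    have hbase : 2 - (N+1)*q ≤ 2 - ε := by linarith
    have hb0 : (0:ℝ) ≤ 2 - (N+1)*q := by linarith [hNq]
    have hpb : (2 - (N+1)*q)^n ≤ (2-ε)^n := pow_le_pow_left₀ hb0 hbase n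
    have hsplit : (2 - (N+1)*q)^n = P * (1 - (N+1)*q/2)^n := by
      rw [hPdef, ← mul_pow]
      congr 1
      ring
    have hber2 : 1 - N*((N+1)*q/2) ≤ (1 - (N+1)*q/2)^n := by
      have hpos : 0 < (N+1)*q := mul_pos hN1 hq
      have hb := one_add_mul_le_pow (a := -((N+1)*q/2)) (by linarith) n
      calc 1 - N*((N+1)*q/2) = 1 + (n:ℝ) * (-((N+1)*q/2)) := by rw [← hNdef]; ring
        _ ≤ (1 + -((N+1)*q/2))^n := hb
        _ = (1 - (N+1)*q/2)^n := by ring_nf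
    have hgood : (99:ℝ)/100 ≤ 1 - N*((N+1)*q/2) := by nlinarith [hNNq]
    have hc : P * (99/100) ≤ (2-ε)^n := by
      calc P * (99/100) ≤ P * (1 - N*((N+1)*q/2)) :=
            mul_le_mul_of_nonneg_left hgood hP.le
        _ ≤ P * (1 - (N+1)*q/2)^n := mul_le_mul_of_nonneg_left hber2 hP.le
        _ = (2 - (N+1)*q)^n := hsplit.symm
        _ ≤ (2-ε)^n := hpb
    have h3 := mul_le_mul_of_nonneg_left hc hε0.le
    rw [heq] at h3
    linarith [h3]
  -- lower bound : 1 + N q/2 ≤ ε P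
  have hlow : 1 + N*(q/2) ≤ ε*P := by
    have hb1 : 2 - ε ≤ 2 - q := by linarith
    have hA0 : (0:ℝ) ≤ (1-q/2)^n := pow_nonneg (by linarith) n
    have hsplit : (2 - q)^n = P * (1-q/2)^n := by
      rw [hPdef, ← mul_pow]; congr 1; ring
    have hA1 : 1 ≤ ε*P*(1-q/2)^n := by
      calc (1:ℝ) = ε * (2-ε)^n := heq.symm
        _ ≤ ε * (2-q)^n :=
            mul_le_mul_of_nonneg_left (pow_le_pow_left₀ (by linarith) hb1 n) hε0.le
        _ = ε*P*(1-q/2)^n := by rw [hsplit]; ring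
    have hB : 1 + N*(q/2) ≤ (1+q/2)^n := by
      have hb := one_add_mul_le_pow (a := q/2) (by linarith) n
      calc 1 + N*(q/2) = 1 + (n:ℝ)*(q/2) := by rw [← hNdef]
        _ ≤ (1+q/2)^n := hb
    have hAB : (1-q/2)^n * (1+q/2)^n ≤ 1 := by
      rw [← mul_pow]
      apply pow_le_one₀ (by nlinarith) (by nlinarith)
    calc 1 + N*(q/2) ≤ (1 + N*(q/2)) * (ε*P*(1-q/2)^n) :=
          le_mul_of_one_le_right (by positivity) hA1
      _ = (ε*P) * ((1-q/2)^n * (1 + N*(q/2))) := by ring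
      _ ≤ (ε*P) * ((1-q/2)^n * (1+q/2)^n) := by
          apply mul_le_mul_of_nonneg_left (mul_le_mul_of_nonneg_left hB hA0)
          positivity
      _ ≤ (ε*P) * 1 := by
          apply mul_le_mul_of_nonneg_left hAB
          positivity
      _ = ε*P := mul_one _
  -- upper bound : ε P < 1 + (3/4)(N+1) q
  have hup : ε*P < 1 + (3/4)*((N+1)*q) := by
    have hεup2 : ε ≤ (100/99)*q := by
      have h := mul_le_mul_of_nonneg_right h2b hq.le
      rw [mul_assoc, hPq, mul_one] at h
      linarith [h]
    have hbase : 2 - (100/99)*q ≤ 2 - ε := by linarith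
    have hb0 : (0:ℝ) ≤ 2 - (100/99)*q := by linarith
    have hpb : (2 - (100/99)*q)^n ≤ (2-ε)^n := pow_le_pow_left₀ hb0 hbase n
    have hsplit : (2 - (100/99)*q)^n = P * (1 - (50/99)*q)^n := by
      rw [hPdef, ← mul_pow]; congr 1; ring
    have hber3 : 1 - N*((50/99)*q) ≤ (1 - (50/99)*q)^n := by
      have hb := one_add_mul_le_pow (a := -((50/99)*q)) (by linarith) n
      calc 1 - N*((50/99)*q) = 1 + (n:ℝ)*(-((50/99)*q)) := by rw [← hNdef]; ring
        _ ≤ (1 + -((50/99)*q))^n := hb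
        _ = (1 - (50/99)*q)^n := by ring_nf
    have hc : P * (1 - N*((50/99)*q)) ≤ (2-ε)^n := by
      calc P * (1 - N*((50/99)*q)) ≤ P * (1 - (50/99)*q)^n :=
            mul_le_mul_of_nonneg_left hber3 hP.le
        _ = (2 - (100/99)*q)^n := hsplit.symm
        _ ≤ (2-ε)^n := hpb
    have h3 := mul_le_mul_of_nonneg_left hc hε0.le
    rw [heq] at h3
    have hNq0 : (0:ℝ) ≤ N*q := by positivity
    have hmul := mul_le_mul_of_nonneg_right h2b
      (show (0:ℝ) ≤ (50/99)*(N*q) by positivity)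
    nlinarith [h3, hmul, hq, hNq0]
  -- convert goal
  have hzpow1 : (2:ℝ) ^ ((1:ℤ) - ((n:ℕ)+1 : ℕ)) = q := by
    rw [show ((1:ℤ) - ((n:ℕ)+1 : ℕ)) = -(n:ℤ) by push_cast; ring,
      zpow_neg, zpow_natCast, hqdef, hPdef]
  have hzpow2 : (4:ℝ) ^ (-(((n:ℕ)+1 : ℕ) : ℤ)) = q^2/4 := by
    rw [zpow_neg, zpow_natCast]
    have h4 : (4:ℝ)^(n+1) = 4 * P^2 := by
      have h44 : (4:ℝ) = 2^2 := by norm_num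
      rw [hPdef, h44, ← pow_mul, ← pow_mul, ← pow_add]
      congr 1
      omega
    rw [h4, hqdef, mul_inv, ← inv_pow]
    ring
  rw [hzpow1, hzpow2]
  push_cast
  rw [← hNdef]
  constructor
  · -- q + (N+1) * (q^2/4) < ε
    have h := mul_le_mul_of_nonneg_right hlow hq.le
    rw [mul_assoc, hPq, mul_one] at h
    have hx : 0 ≤ (N - 29)*(q*q) := mul_nonneg (by linarith) (by positivity)
    nlinarith [h, mul_pos hq hq, hx]
  · have h := mul_lt_mul_of_pos_right hup hq
    rw [mul_assoc, hPq, mul_one] at h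
    nlinarith [h]
end

section
/- Let σ be a proper k-coloring of a graph G, let v₀ be a vertex and l ≠ σ(v₀) a target color. Suppose a process produces a set D of 'dead' vertices containing v₀ such that: (i) every neighbor of v₀ colored l is in D; (ii) every vertex w ∈ D, w ≠ v₀, has an assigned list L_w of at least 4 colors not containing l such that w has no neighbor outside D colored with any color of L_w, and all neighbors of w outside D colored with colors in L_w is empty; and (iii) the subgraph of G induced on D is 4-choosable. Then G has a proper k-coloring τ with τ(v₀) = l and τ agreeing with σ outside D; in particular dist(σ,τ) ≤ |D|. -/
/-- Given a proper k-coloring σ of G, a vertex v₀, a target color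
l ≠ σ(v₀), and a set D of "dead" vertices containing v₀ such that (i) all
neighbors of v₀ colored l lie in D, (ii) each w ∈ D, w ≠ v₀, has a list L w of
≥ 4 colors avoiding l with no neighbor of w outside D colored by a color of L w,
and (iii) the subgraph induced on D is 4-choosable, then G has a proper
k-coloring τ with τ(v₀) = l agreeing with σ outside D; in particular
dist(σ,τ) ≤ |D|. -/
theorem stmt16 {V : Type*} [Fintype V] [DecidableEq V] (k : ℕ) (hk : 6 ≤ k)
    (G : SimpleGraph V) [DecidableRel G.Adj] (σ : V → Fin k)
    (hσ : ∀ u v, G.Adj u v → σ u ≠ σ v)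
    (v₀ : V) (l : Fin k) (hl : l ≠ σ v₀)
    (D : Finset V) (hv₀ : v₀ ∈ D)
    (h1 : ∀ w, G.Adj v₀ w → σ w = l → w ∈ D)
    (L : V → Finset (Fin k))
    (h2 : ∀ w ∈ D, w ≠ v₀ →
      4 ≤ (L w).card ∧ l ∉ L w ∧ ∀ u, u ∉ D → G.Adj w u → σ u ∉ L w)
    (h3 : ∀ L' : V → Finset (Fin k), (∀ v ∈ D, 4 ≤ (L' v).card) →
      ∃ c : V → Fin k, (∀ v ∈ D, c v ∈ L' v) ∧
        ∀ u ∈ D, ∀ v ∈ D, G.Adj u v → c u ≠ c v) :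
    ∃ τ : V → Fin k, (∀ u v, G.Adj u v → τ u ≠ τ v) ∧ τ v₀ = l ∧
      (∀ v, v ∉ D → τ v = σ v) ∧
      (Finset.univ.filter (fun v => τ v ≠ σ v)).card ≤ D.card := by
  obtain ⟨c, hc1, hc2⟩ := h3 (fun v => if v = v₀ then Finset.univ else L v) (by
    intro v hv
    by_cases hvv : v = v₀
    · simp [hvv, Finset.card_univ]
      omega
    · simpa [hvv] using (h2 v hv hvv).1)
  have hLw : ∀ w ∈ D, w ≠ v₀ → c w ∈ L w := by
    intro w hw hwv
    have := hc1 w hw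
    simpa [hwv] using this
  set τ : V → Fin k := fun v => if v ∈ D then (if v = v₀ then l else c v) else σ v with hτ
  have hout : ∀ v, v ∉ D → τ v = σ v := by
    intro v hv; simp [hτ, hv]
  have hv0 : τ v₀ = l := by simp [hτ, hv₀]
  refine ⟨τ, ?_, hv0, hout, ?_⟩
  · intro u v huv
    have hne : u ≠ v := G.ne_of_adj huv
    by_cases hu : u ∈ D <;> by_cases hv : v ∈ D
    · by_cases hu0 : u = v₀ <;> by_cases hv0' : v = v₀
      · exact absurd (hu0.trans hv0'.symm) hne
      · -- τ u = l, τ v = c v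
        simp only [hτ, hv₀, hu, hv, hu0, hv0', if_true, if_false, if_pos, if_neg]
        intro h
        exact (h2 v hv hv0').2.1 (h ▸ hLw v hv hv0')
      · simp only [hτ, hv₀, hu, hv, hu0, hv0', if_true, if_false, if_pos, if_neg]
        intro h
        exact (h2 u hu hu0).2.1 (h ▸ hLw u hu hu0)
      · simp only [hτ, hv₀, hu, hv, hu0, hv0', if_true, if_false, if_pos, if_neg]
        exact hc2 u hu v hv huv
    · by_cases hu0 : u = v₀
      · simp only [hτ, hv₀, hu, hv, hu0, if_true, if_false, if_pos, if_neg]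
        intro h
        exact hv (h1 v (hu0 ▸ huv) h.symm)
      · simp only [hτ, hv₀, hu, hv, hu0, if_true, if_false, if_pos, if_neg]
        intro h
        exact (h2 u hu hu0).2.2 v hv huv (h ▸ hLw u hu hu0)
    · by_cases hv0' : v = v₀
      · simp only [hτ, hv₀, hu, hv, hv0', if_true, if_false, if_pos, if_neg]
        intro h
        exact hu (h1 u (hv0' ▸ huv.symm) h)
      · simp only [hτ, hv₀, hu, hv, hv0', if_true, if_false, if_pos, if_neg]
        intro h
        exact (h2 v hv hv0').2.2 u hu huv.symm (h ▸ hLw v hv hv0')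
    · simp only [hτ, hv₀, hu, hv, if_false]
      exact hσ u v huv
  · apply Finset.card_le_card
    intro v hv
    simp only [Finset.mem_filter, Finset.mem_univ, true_and] at hv
    by_contra h
    exact hv (hout v h)
end
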